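/- Classical propositional logic has the uniform Lyndon interpolation property: for every propositional formula φ and all finite sets P⁺, P⁻ of propositional variables, there exists a formula θ such that (1) φ→θ is a tautology, (2) v⁺(θ)⊆v⁺(φ)∖P⁺ and v⁻(θ)⊆v⁻(φ)∖P⁻, and (3) for every formula ψ such that φ→ψ is a tautology, v⁺(ψ)∩P⁺=∅ and v⁻(ψ)∩P⁻=∅, the formula θ→ψ is a tautology. -/

import Mathlib

/-- Propositional formulas over countably many variables. -/
inductive PropForm : Type where
  | var : ℕ → PropForm
  | bot : PropForm
  | and : PropForm → PropForm → PropForm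
  | or : PropForm → PropForm → PropForm
  | not : PropForm → PropForm
  | imp : PropForm → PropForm → PropForm

namespace PropForm

mutual
  /-- positively occurring variables -/
  def vpos : PropForm → Finset ℕ
    | var p => {p}
    | bot => ∅
    | and φ ψ => vpos φ ∪ vpos ψ
    | or φ ψ => vpos φ ∪ vpos ψ
    | not φ => vneg φ
    | imp φ ψ => vneg φ ∪ vpos ψ
  /-- negatively occurring variables -/
  def vneg : PropForm → Finset ℕ
    | var _ => ∅
    | bot => ∅
    | and φ ψ => vneg φ ∪ vneg ψ
    | or φ ψ => vneg φ ∪ vneg ψ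
    | not φ => vpos φ
    | imp φ ψ => vpos φ ∪ vneg ψ
end

/-- Classical evaluation of a formula under a truth assignment. -/
def eval (V : ℕ → Bool) : PropForm → Bool
  | var p => V p
  | bot => false
  | and φ ψ => eval V φ && eval V ψ
  | or φ ψ => eval V φ || eval V ψ
  | not φ => !(eval V φ)
  | imp φ ψ => !(eval V φ) || eval V ψ

end PropForm

/-- `V0 →₀^{(P⁺,P⁻)} V1`: every `(P⁺,P⁻)`-formula true under `V0` is true under `V1`. -/
def PropArrow (Pp Pm : Finset ℕ) (V0 V1 : ℕ → Bool) : Prop :=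
  ∀ φ : PropForm, φ.vpos ⊆ Pp → φ.vneg ⊆ Pm → φ.eval V0 = true → φ.eval V1 = true

/-- A tautology of classical propositional logic. -/
def Tautology (φ : PropForm) : Prop := ∀ V : ℕ → Bool, φ.eval V = true

-- auxiliary part to splice in
open PropForm in
def bigAnd : List PropForm → PropForm
  | [] => .not .bot
  | a :: l => .and a (bigAnd l)

open PropForm in
def bigOr : List PropForm → PropForm
  | [] => .bot
  | a :: l => .or a (bigOr l)

lemma bigAnd_eval (V : ℕ → Bool) (l : List PropForm) :
    (bigAnd l).eval V = true ↔ ∀ a ∈ l, a.eval V = true := by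
  induction l with
  | nil => simp [bigAnd, PropForm.eval]
  | cons a l ih => simp [bigAnd, PropForm.eval, ih]

lemma bigOr_eval (V : ℕ → Bool) (l : List PropForm) :
    (bigOr l).eval V = true ↔ ∃ a ∈ l, a.eval V = true := by
  induction l with
  | nil => simp [bigOr, PropForm.eval]
  | cons a l ih => simp [bigOr, PropForm.eval, ih]

lemma bigAnd_vpos {X : Finset ℕ} {l : List PropForm}
    (h : ∀ a ∈ l, a.vpos ⊆ X) : (bigAnd l).vpos ⊆ X := by
  induction l with
  | nil => simp [bigAnd, PropForm.vpos, PropForm.vneg]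
  | cons a l ih =>
      simp only [bigAnd, PropForm.vpos, Finset.union_subset_iff]
      exact ⟨h a (by simp), ih fun a ha => h a (by simp [ha])⟩

lemma bigAnd_vneg {X : Finset ℕ} {l : List PropForm}
    (h : ∀ a ∈ l, a.vneg ⊆ X) : (bigAnd l).vneg ⊆ X := by
  induction l with
  | nil => simp [bigAnd, PropForm.vpos, PropForm.vneg]
  | cons a l ih =>
      simp only [bigAnd, PropForm.vneg, Finset.union_subset_iff]
      exact ⟨h a (by simp), ih fun a ha => h a (by simp [ha])⟩

lemma bigOr_vpos {X : Finset ℕ} {l : List PropForm}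
    (h : ∀ a ∈ l, a.vpos ⊆ X) : (bigOr l).vpos ⊆ X := by
  induction l with
  | nil => simp [bigOr, PropForm.vpos]
  | cons a l ih =>
      simp only [bigOr, PropForm.vpos, Finset.union_subset_iff]
      exact ⟨h a (by simp), ih fun a ha => h a (by simp [ha])⟩

lemma bigOr_vneg {X : Finset ℕ} {l : List PropForm}
    (h : ∀ a ∈ l, a.vneg ⊆ X) : (bigOr l).vneg ⊆ X := by
  induction l with
  | nil => simp [bigOr, PropForm.vneg]
  | cons a l ih =>
      simp only [bigOr, PropForm.vneg, Finset.union_subset_iff]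
      exact ⟨h a (by simp), ih fun a ha => h a (by simp [ha])⟩

/-- Monotonicity: raising variables not occurring negatively and lowering
variables not occurring positively preserves truth. -/
lemma eval_mono (χ : PropForm) : ∀ V V' : ℕ → Bool,
    (∀ p, V p = false → V' p = true → p ∉ χ.vneg) →
    (∀ p, V p = true → V' p = false → p ∉ χ.vpos) →
    χ.eval V = true → χ.eval V' = true := by
  induction χ with
  | var p =>
      intro V V' h h' hv
      simp only [PropForm.eval] at hv ⊢
      cases hW : V' p with
      | true => rfl
      | false => exact absurd (by simp [PropForm.vpos]) (h' p hv hW)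
  | bot => intro V V' _ _ hv; simp [PropForm.eval] at hv
  | and φ ψ ihφ ihψ =>
      intro V V' h h' hv
      simp only [PropForm.eval, Bool.and_eq_true] at hv ⊢
      refine ⟨ihφ V V' (fun p a b => ?_) (fun p a b => ?_) hv.1,
              ihψ V V' (fun p a b => ?_) (fun p a b => ?_) hv.2⟩
      · exact fun hm => h p a b (by simp [PropForm.vneg, hm])
      · exact fun hm => h' p a b (by simp [PropForm.vpos, hm])
      · exact fun hm => h p a b (by simp [PropForm.vneg, hm])
      · exact fun hm => h' p a b (by simp [PropForm.vpos, hm])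
  | or φ ψ ihφ ihψ =>
      intro V V' h h' hv
      simp only [PropForm.eval, Bool.or_eq_true] at hv ⊢
      rcases hv with hv | hv
      · exact Or.inl (ihφ V V'
          (fun p a b hm => h p a b (by simp [PropForm.vneg, hm]))
          (fun p a b hm => h' p a b (by simp [PropForm.vpos, hm])) hv)
      · exact Or.inr (ihψ V V'
          (fun p a b hm => h p a b (by simp [PropForm.vneg, hm]))
          (fun p a b hm => h' p a b (by simp [PropForm.vpos, hm])) hv)
  | not φ ih =>
      intro V V' h h' hv
      simp only [PropForm.eval, Bool.not_eq_true'] at hv ⊢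
      by_contra h0
      rw [Bool.not_eq_false] at h0
      have := ih V' V
        (fun p a b hm => h' p b a (by simp [PropForm.vpos, hm]))
        (fun p a b hm => h p b a (by simp [PropForm.vneg, hm])) h0
      rw [hv] at this; exact Bool.false_ne_true this
  | imp φ ψ ihφ ihψ =>
      intro V V' h h' hv
      simp only [PropForm.eval, Bool.or_eq_true, Bool.not_eq_true'] at hv ⊢
      rcases hv with hv | hv
      · left
        by_contra h0
        rw [Bool.not_eq_false] at h0
        have := ihφ V' V
          (fun p a b hm => h' p b a (by simp [PropForm.vpos, hm]))
          (fun p a b hm => h p b a (by simp [PropForm.vneg, hm])) h0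
        rw [hv] at this; exact Bool.false_ne_true this
      · exact Or.inr (ihψ V V'
          (fun p a b hm => h p a b (by simp [PropForm.vneg, hm]))
          (fun p a b hm => h' p a b (by simp [PropForm.vpos, hm])) hv)

lemma eval_agree (χ : PropForm) (V V' : ℕ → Bool)
    (h : ∀ p ∈ χ.vpos ∪ χ.vneg, V p = V' p) : χ.eval V = χ.eval V' := by
  have h1 : ∀ p, V p = false → V' p = true → p ∉ χ.vneg := by
    intro p a b hm; rw [h p (Finset.mem_union_right _ hm)] at a; simp [a] at b
  have h2 : ∀ p, V p = true → V' p = false → p ∉ χ.vpos := by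
    intro p a b hm; rw [h p (Finset.mem_union_left _ hm)] at a; simp [a] at b
  have h1' : ∀ p, V' p = false → V p = true → p ∉ χ.vneg := by
    intro p a b hm; rw [h p (Finset.mem_union_right _ hm)] at b; simp [b] at a
  have h2' : ∀ p, V' p = true → V p = false → p ∉ χ.vpos := by
    intro p a b hm; rw [h p (Finset.mem_union_left _ hm)] at b; simp [b] at a
  cases hA : χ.eval V with
  | true => exact (eval_mono χ V V' h1 h2 hA).symm
  | false =>
      cases hB : χ.eval V' with
      | false => rfl
      | true => rw [← hA, eval_mono χ V' V h1' h2' hB]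

def asg (T : Finset ℕ) : ℕ → Bool := fun p => decide (p ∈ T)

noncomputable def cube (Qp Qm T : Finset ℕ) : PropForm :=
  bigAnd (((Qp ∩ T).toList.map .var) ++ ((Qm \ T).toList.map fun p => .not (.var p)))

noncomputable def theta (φ : PropForm) (Pp Pm : Finset ℕ) : PropForm :=
  bigOr ((((φ.vpos ∪ φ.vneg).powerset.toList.filter (fun T => φ.eval (asg T))).map
    (cube (φ.vpos \ Pp) (φ.vneg \ Pm))))

theorem stmt1 (φ : PropForm) (Pp Pm : Finset ℕ) :
    ∃ θ : PropForm,
      Tautology (φ.imp θ) ∧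
      θ.vpos ⊆ φ.vpos \ Pp ∧ θ.vneg ⊆ φ.vneg \ Pm ∧
      ∀ ψ : PropForm, Tautology (φ.imp ψ) →
        Disjoint ψ.vpos Pp → Disjoint ψ.vneg Pm →
        Tautology (θ.imp ψ) := by
  classical
  refine ⟨theta φ Pp Pm, ?_, ?_, ?_, ?_⟩
  · -- φ → θ is a tautology
    intro V
    simp only [PropForm.eval, Bool.or_eq_true, Bool.not_eq_true']
    cases hφ : φ.eval V with
    | false => exact Or.inl rfl
    | true =>
      right
      set S := φ.vpos ∪ φ.vneg with hS
      set T := S.filter (fun p => V p = true) with hT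
      have hagree : ∀ p ∈ S, V p = asg T p := by
        intro p hp
        cases hV : V p <;> simp [asg, hT, Finset.mem_filter, hp, hV]
      have hVT : φ.eval (asg T) = true := by
        rw [← eval_agree φ V (asg T) hagree]; exact hφ
      rw [theta, bigOr_eval]
      refine ⟨cube (φ.vpos \ Pp) (φ.vneg \ Pm) T, ?_, ?_⟩
      · refine List.mem_map_of_mem ?_
        rw [List.mem_filter]
        refine ⟨?_, hVT⟩
        rw [Finset.mem_toList, Finset.mem_powerset]
        exact Finset.filter_subset _ _
      · rw [cube, bigAnd_eval]
        intro a ha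
        rcases List.mem_append.1 ha with ha | ha
        · rcases List.mem_map.1 ha with ⟨p, hp, rfl⟩
          rw [Finset.mem_toList, Finset.mem_inter] at hp
          have : V p = true := (Finset.mem_filter.1 hp.2).2
          simpa [PropForm.eval] using this
        · rcases List.mem_map.1 ha with ⟨p, hp, rfl⟩
          rw [Finset.mem_toList, Finset.mem_sdiff] at hp
          have hpS : p ∈ S := Finset.mem_union_right _ (Finset.mem_sdiff.1 hp.1).1
          have hVp : V p = false := by
            by_contra h0
            rw [Bool.not_eq_false] at h0
            exact hp.2 (Finset.mem_filter.2 ⟨hpS, h0⟩)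
          simp [PropForm.eval, hVp]
  · -- vpos of θ
    rw [theta]
    apply bigOr_vpos
    intro a ha
    rcases List.mem_map.1 ha with ⟨T, _, rfl⟩
    rw [cube]
    apply bigAnd_vpos
    intro a ha
    rcases List.mem_append.1 ha with ha | ha
    · rcases List.mem_map.1 ha with ⟨p, hp, rfl⟩
      rw [Finset.mem_toList, Finset.mem_inter] at hp
      simp only [PropForm.vpos, Finset.singleton_subset_iff]
      exact hp.1
    · rcases List.mem_map.1 ha with ⟨p, hp, rfl⟩
      simp [PropForm.vpos, PropForm.vneg]
  · -- vneg of θ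
    rw [theta]
    apply bigOr_vneg
    intro a ha
    rcases List.mem_map.1 ha with ⟨T, _, rfl⟩
    rw [cube]
    apply bigAnd_vneg
    intro a ha
    rcases List.mem_append.1 ha with ha | ha
    · rcases List.mem_map.1 ha with ⟨p, hp, rfl⟩
      simp [PropForm.vpos, PropForm.vneg]
    · rcases List.mem_map.1 ha with ⟨p, hp, rfl⟩
      rw [Finset.mem_toList, Finset.mem_sdiff] at hp
      simp only [PropForm.vneg, PropForm.vpos, Finset.singleton_subset_iff]
      exact hp.1
  · -- θ is the strongest
    intro ψ htaut hdp hdm W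
    simp only [PropForm.eval, Bool.or_eq_true, Bool.not_eq_true']
    cases hθ : (theta φ Pp Pm).eval W with
    | false => exact Or.inl rfl
    | true =>
      right
      rw [theta, bigOr_eval] at hθ
      obtain ⟨a, ha, hWa⟩ := hθ
      rcases List.mem_map.1 ha with ⟨T, hT, rfl⟩
      rw [List.mem_filter] at hT
      have hVφ : φ.eval (asg T) = true := hT.2
      set V := asg T with hV
      rw [cube, bigAnd_eval] at hWa
      have fact1 : ∀ p ∈ φ.vpos \ Pp, p ∈ T → W p = true := by
        intro p hp hpT
        have := hWa (.var p) (List.mem_append.2 (Or.inl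
          (List.mem_map_of_mem (Finset.mem_toList.2 (Finset.mem_inter.2 ⟨hp, hpT⟩)))))
        simpa [PropForm.eval] using this
      have fact2 : ∀ p ∈ φ.vneg \ Pm, p ∉ T → W p = false := by
        intro p hp hpT
        have := hWa (.not (.var p)) (List.mem_append.2 (Or.inr
          (List.mem_map_of_mem (Finset.mem_toList.2 (Finset.mem_sdiff.2 ⟨hp, hpT⟩)))))
        simpa [PropForm.eval] using this
      set U : ℕ → Bool := fun p =>
        if p ∈ φ.vpos then (if p ∈ φ.vneg then V p else V p || W p)
        else (if p ∈ φ.vneg then V p && W p else W p) with hU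
      have hUφ : φ.eval U = true := by
        refine eval_mono φ V U ?_ ?_ hVφ
        · intro p a b hneg
          by_cases h1 : p ∈ φ.vpos <;> simp [hU, h1, hneg, a] at b
        · intro p a b hpos
          by_cases h2 : p ∈ φ.vneg <;> simp [hU, hpos, h2, a] at b
      have hUψ : ψ.eval U = true := by
        have := htaut U
        simp only [PropForm.eval, Bool.or_eq_true, Bool.not_eq_true'] at this
        rcases this with h | h
        · rw [hUφ] at h; exact absurd h (by simp)
        · exact h
      refine eval_mono ψ U W ?_ ?_ hUψ
      · intro p a b hmem
        have hpPm : p ∉ Pm := Finset.disjoint_left.1 hdm hmem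
        by_cases h1 : p ∈ φ.vpos <;> by_cases h2 : p ∈ φ.vneg
        · have hVp : V p = false := by simpa [hU, h1, h2] using a
          have hpT : p ∉ T := by simpa [hV, asg] using hVp
          have := fact2 p (Finset.mem_sdiff.2 ⟨h2, hpPm⟩) hpT
          rw [this] at b; exact absurd b (by simp)
        · have hor : (V p || W p) = false := by simpa [hU, h1, h2] using a
          simp [b] at hor
        · have hand : (V p && W p) = false := by simpa [hU, h1, h2] using a
          rw [b] at hand; simp at hand
          have hpT : p ∉ T := by simpa [hV, asg] using hand
          have := fact2 p (Finset.mem_sdiff.2 ⟨h2, hpPm⟩) hpT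
          rw [this] at b; exact absurd b (by simp)
        · have hW : W p = false := by simpa [hU, h1, h2] using a
          rw [hW] at b; exact absurd b (by simp)
      · intro p a b hmem
        have hpPp : p ∉ Pp := Finset.disjoint_left.1 hdp hmem
        by_cases h1 : p ∈ φ.vpos <;> by_cases h2 : p ∈ φ.vneg
        · have hVp : V p = true := by simpa [hU, h1, h2] using a
          have hpT : p ∈ T := by simpa [hV, asg] using hVp
          have := fact1 p (Finset.mem_sdiff.2 ⟨h1, hpPp⟩) hpT
          rw [this] at b; exact absurd b (by simp)
        · have hor : (V p || W p) = true := by simpa [hU, h1, h2] using a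
          rw [b] at hor; simp at hor
          have hpT : p ∈ T := by simpa [hV, asg] using hor
          have := fact1 p (Finset.mem_sdiff.2 ⟨h1, hpPp⟩) hpT
          rw [this] at b; exact absurd b (by simp)
        · have hand : (V p && W p) = true := by simpa [hU, h1, h2] using a
          simp [b] at hand
        · have hW : W p = true := by simpa [hU, h1, h2] using a
          rw [hW] at b; exact absurd b (by simp)
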